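/- Let N, L be positive natural numbers, K ∈ ℝ^{N×N} a symmetric matrix, y : {1,…,N} → {1,…,L}, e ∈ ℝ^{N×L}, and fix t ∈ {1,…,N} with e_{tl} = 1 − δ_{l,y_t} for all l. Let α, α' ∈ ℝ^{N×L} satisfy Σ_{l=1}^L α_{il} = 0 and Σ_{l=1}^L α'_{il} = 0 for every i, and α'_{tl} = 0 for every l; set β := α − α'. Suppose that for every i ≠ t there exist constants c_i, c'_i ∈ ℝ such that Σ_{j=1}^N α_{jl} K_{ij} + e_{il} = c_i and Σ_{j=1}^N α'_{jl} K_{ij} + e_{il} = c'_i for every l with β_{il} ≠ 0. Then Σ_{i,j=1}^N (Σ_{l=1}^L β_{il} β_{jl}) K_{ij} = Σ_{l=1}^L α_{tl}·Σ_{j=1}^N (α_{jl} − α'_{jl}) K_{tj}. -/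
import Mathlib


/-- Equation (14) in the proof of Theorem 1 of the MU-SVM paper:
equating `I₁ = W(α'+β) − W(α')` and `I₂ = W(α) − W(α−β)` for `β = α − α'`. -/
theorem stmt_2 {N L : ℕ} (hN : 0 < N) (hL : 0 < L)
    (K : Matrix (Fin N) (Fin N) ℝ) (hK : K.IsSymm)
    (y : Fin N → Fin L) (e : Fin N → Fin L → ℝ) (t : Fin N)
    (he : ∀ l, e t l = 1 - (if l = y t then (1 : ℝ) else 0))
    (α α' : Fin N → Fin L → ℝ)
    (hα : ∀ i, ∑ l, α i l = 0) (hα' : ∀ i, ∑ l, α' i l = 0)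
    (hα't : ∀ l, α' t l = 0)
    (β : Fin N → Fin L → ℝ) (hβ : ∀ i l, β i l = α i l - α' i l)
    (hconst : ∀ i, i ≠ t → ∃ c c' : ℝ, ∀ l, β i l ≠ 0 →
        ((∑ j, α j l * K i j) + e i l = c) ∧ ((∑ j, α' j l * K i j) + e i l = c')) :
    ∑ i, ∑ j, (∑ l, β i l * β j l) * K i j
      = ∑ l, α t l * (∑ j, (α j l - α' j l) * K t j) := by
  have hβsum : ∀ i, ∑ l, β i l = 0 := by
    intro i
    simp only [hβ, Finset.sum_sub_distrib, hα, hα', sub_zero]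
  have hf : ∀ i, ∑ j, (∑ l, β i l * β j l) * K i j
      = ∑ l, β i l * (∑ j, β j l * K i j) := by
    intro i
    simp only [Finset.sum_mul, Finset.mul_sum]
    rw [Finset.sum_comm]
    exact Finset.sum_congr rfl fun l _ => Finset.sum_congr rfl fun j _ => by ring
  have key : ∀ i, i ≠ t → ∑ l, β i l * (∑ j, β j l * K i j) = 0 := by
    intro i hi
    obtain ⟨c, c', h⟩ := hconst i hi
    have hterm : ∀ l, β i l * (∑ j, β j l * K i j) = β i l * (c - c') := by
      intro l
      by_cases hbl : β i l = 0
      · simp [hbl]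
      · obtain ⟨h1, h2⟩ := h l hbl
        have hsum : ∑ j, β j l * K i j = c - c' := by
          simp only [hβ, sub_mul, Finset.sum_sub_distrib]
          linarith
        rw [hsum]
    rw [Finset.sum_congr rfl fun l _ => hterm l, ← Finset.sum_mul, hβsum, zero_mul]
  calc ∑ i, ∑ j, (∑ l, β i l * β j l) * K i j
      = ∑ i, ∑ l, β i l * (∑ j, β j l * K i j) :=
        Finset.sum_congr rfl fun i _ => hf i
    _ = ∑ l, β t l * (∑ j, β j l * K t j) := by
        apply Finset.sum_eq_single t (fun i _ hi => key i hi)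
        intro ht; exact absurd (Finset.mem_univ t) ht
    _ = ∑ l, α t l * (∑ j, (α j l - α' j l) * K t j) := by
        simp only [hβ, hα't, sub_zero]
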